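/- For every natural number n, the Fibonacci-Fubini number satisfies the explicit formula 𝓕_n = (1/√5) · Σ_{k=0}^{n} Σ_{j=0}^{k} (-1)^{k-j} · C(k,j) · ((α^{k+1} - β^{k+1})/k!) · j^n, where α = (1+√5)/2 and β = (1-√5)/2. -/

import Mathlib

/-- Stirling numbers of the second kind. -/
def stirling2 : ℕ → ℕ → ℕ
  | 0, 0 => 1
  | 0, _ + 1 => 0
  | _ + 1, 0 => 0
  | n + 1, k + 1 => stirling2 n k + (k + 1) * stirling2 n (k + 1)

open Finset Real

private lemma neg_one_pow_sub_eq {j k : ℕ} (h : j ≤ k) :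
    ((-1 : ℝ)) ^ (k - j) = (-1) ^ k * (-1) ^ j := by
  have h2 : ((-1 : ℝ)) ^ j * (-1) ^ j = 1 := by
    rw [← pow_add]; exact Even.neg_one_pow ⟨j, rfl⟩
  calc ((-1 : ℝ)) ^ (k - j) = (-1) ^ (k - j) * ((-1) ^ j * (-1) ^ j) := by rw [h2, mul_one]
    _ = (-1) ^ (k - j + j) * (-1) ^ j := by rw [pow_add]; ring
    _ = (-1) ^ k * (-1) ^ j := by rw [Nat.sub_add_cancel h]

private noncomputable def T (n k : ℕ) : ℝ :=
  ∑ j ∈ range (k + 1), (-1 : ℝ) ^ k * (-1) ^ j * (k.choose j) * (j : ℝ) ^ n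

private lemma T_key (n : ℕ) : ∀ k, T n k = (k.factorial : ℝ) * stirling2 n k := by
  induction n with
  | zero =>
    intro k
    have : T 0 k = (-1 : ℝ) ^ k * ∑ j ∈ range (k + 1), (-1 : ℝ) ^ j * (k.choose j) := by
      rw [T, Finset.mul_sum]
      exact Finset.sum_congr rfl fun j _ => by rw [pow_zero]; ring
    rw [this]
    have hc : (∑ j ∈ range (k + 1), (-1 : ℝ) ^ j * (k.choose j)) =
        if k = 0 then 1 else 0 := by
      have := @Int.alternating_sum_range_choose k
      have := congrArg (fun z : ℤ => (z : ℝ)) this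
      push_cast at this
      simpa using this
    rw [hc]
    cases k with
    | zero => simp [stirling2]
    | succ m => simp [stirling2]
  | succ n ih =>
    intro k
    cases k with
    | zero =>
      simp [T, stirling2]
    | succ k =>
      -- Step A : T (n+1) (k+1) = (k+1) * U where U = ∑ i in range (k+1), s i * (i+1)^n
      have stepA : T (n + 1) (k + 1) =
          (k + 1 : ℝ) * ∑ i ∈ range (k + 1),
            (-1 : ℝ) ^ k * (-1) ^ i * (k.choose i) * ((i : ℝ) + 1) ^ n := by
        rw [T, Finset.sum_range_succ']
        rw [Finset.mul_sum]
        have h0 : ((-1 : ℝ) ^ (k + 1) * (-1) ^ 0 * ((k+1).choose 0) * ((0 : ℕ) : ℝ) ^ (n + 1)) = 0 := by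
          simp
        rw [h0, add_zero]
        refine Finset.sum_congr rfl fun i _ => ?_
        have hch : ((i + 1) * (k + 1).choose (i + 1) : ℝ) = ((k + 1) * k.choose i : ℝ) := by
          have := Nat.add_one_mul_choose_eq k i
          -- Nat.succ k * k.choose i = (k+1).choose (i+1) * (i+1)
          have := congrArg (fun z : ℕ => (z : ℝ)) this
          push_cast at this
          linarith
        have hpow : ((i : ℝ) + 1) ^ (n + 1) = ((i : ℝ) + 1) * ((i : ℝ) + 1) ^ n := by ring
        push_cast
        rw [hpow]
        linear_combination ((-1:ℝ)^k * (-1)^i * ((i:ℝ)+1)^n) * hch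
      -- Step B : T n (k+1) = U - T n k
      have stepB : T n (k + 1) =
          (∑ i ∈ range (k + 1),
            (-1 : ℝ) ^ k * (-1) ^ i * (k.choose i) * ((i : ℝ) + 1) ^ n) - T n k := by
        have e1 : T n (k + 1) =
            (∑ i ∈ range (k + 1),
              (-1 : ℝ) ^ (k+1) * (-1) ^ (i+1) * ((k+1).choose (i+1)) * ((i+1 : ℕ) : ℝ) ^ n)
              + (-1 : ℝ) ^ (k+1) * (-1) ^ 0 * ((k+1).choose 0) * ((0:ℕ) : ℝ) ^ n := by
          rw [T, Finset.sum_range_succ']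
        have e2 : ∀ i ∈ range (k + 1),
            (-1 : ℝ) ^ (k+1) * (-1) ^ (i+1) * ((k+1).choose (i+1)) * ((i+1 : ℕ) : ℝ) ^ n =
            (-1 : ℝ) ^ k * (-1) ^ i * (k.choose i) * ((i : ℝ) + 1) ^ n
            + (-1 : ℝ) ^ k * (-1) ^ i * (k.choose (i+1)) * ((i : ℝ) + 1) ^ n := by
          intro i _
          rw [Nat.choose_succ_succ]
          push_cast
          ring
        rw [e1, Finset.sum_congr rfl e2, Finset.sum_add_distrib]
        -- now handle V := ∑ i, (-1)^k (-1)^i C(k,i+1) (i+1)^n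
        have eW : T n k =
            (∑ i ∈ range (k + 1),
              (-1 : ℝ) ^ k * (-1) ^ (i+1) * (k.choose (i+1)) * ((i+1 : ℕ) : ℝ) ^ n)
              + (-1 : ℝ) ^ k * (-1) ^ 0 * (k.choose 0) * ((0:ℕ) : ℝ) ^ n := by
          have : (∑ j ∈ range (k + 2), (-1 : ℝ) ^ k * (-1) ^ j * (k.choose j) * (j : ℝ) ^ n) = T n k := by
            rw [Finset.sum_range_succ, T]
            simp [Nat.choose_succ_self]
          rw [← this, Finset.sum_range_succ']
        have eV : (∑ i ∈ range (k + 1),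
              (-1 : ℝ) ^ k * (-1) ^ i * (k.choose (i+1)) * ((i : ℝ) + 1) ^ n) =
            (-1 : ℝ) ^ k * ((0:ℕ) : ℝ) ^ n - T n k := by
          rw [eW]
          have : ∀ i ∈ range (k+1),
              (-1 : ℝ) ^ k * (-1) ^ (i+1) * (k.choose (i+1)) * ((i+1 : ℕ) : ℝ) ^ n =
              -((-1 : ℝ) ^ k * (-1) ^ i * (k.choose (i+1)) * ((i : ℝ) + 1) ^ n) := by
            intro i _; push_cast; ring
          rw [Finset.sum_congr rfl this, Finset.sum_neg_distrib]
          simp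
        rw [eV]
        push_cast [Nat.choose_zero_right]
        ring
      have ihk := ih k
      have ihk1 := ih (k + 1)
      have hrec : (stirling2 (n + 1) (k + 1) : ℝ) =
          (stirling2 n k : ℝ) + (k + 1 : ℝ) * stirling2 n (k + 1) := by
        show ((stirling2 n k + (k + 1) * stirling2 n (k + 1) : ℕ) : ℝ) = _
        push_cast; ring
      have hfac : ((k + 1).factorial : ℝ) = (k + 1 : ℝ) * (k.factorial : ℝ) := by
        rw [Nat.factorial_succ]; push_cast; ring
      rw [stepA, hrec, hfac]
      have hU : (∑ i ∈ range (k + 1),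
          (-1 : ℝ) ^ k * (-1) ^ i * (k.choose i) * ((i : ℝ) + 1) ^ n) = T n k + T n (k + 1) := by
        rw [stepB]; ring
      rw [hU, ihk, ihk1, hfac]
      ring

open Finset Real in
/-- Explicit formula for the Fibonacci-Fubini numbers. -/
theorem fibonacciFubini_explicit (n : ℕ) :
    (∑ k ∈ range (n + 1), (Nat.fib (k + 1) * stirling2 n k : ℝ)) =
      (1 / Real.sqrt 5) *
        ∑ k ∈ range (n + 1), ∑ j ∈ range (k + 1),
          (-1 : ℝ) ^ (k - j) * (k.choose j) *
            ((((1 + Real.sqrt 5) / 2) ^ (k + 1) - ((1 - Real.sqrt 5) / 2) ^ (k + 1)) /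
              (k.factorial : ℝ)) * (j : ℝ) ^ n := by
  have h5 : Real.sqrt 5 ≠ 0 := by positivity
  rw [Finset.mul_sum]
  refine Finset.sum_congr rfl fun k _ => ?_
  have hfib : (((1 + Real.sqrt 5) / 2) ^ (k+1) - ((1 - Real.sqrt 5) / 2) ^ (k+1)) =
      Real.sqrt 5 * (Nat.fib (k+1) : ℝ) := by
    have := Real.coe_fib_eq (k + 1)
    rw [goldenRatio, goldenConj] at this
    field_simp at this ⊢
    linarith
  have hin : (∑ j ∈ range (k + 1),
      (-1 : ℝ) ^ (k - j) * (k.choose j) *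
        ((((1 + Real.sqrt 5) / 2) ^ (k + 1) - ((1 - Real.sqrt 5) / 2) ^ (k + 1)) /
          (k.factorial : ℝ)) * (j : ℝ) ^ n) =
      (Real.sqrt 5 * (Nat.fib (k+1) : ℝ) / (k.factorial : ℝ)) * T n k := by
    rw [T, Finset.mul_sum]
    refine Finset.sum_congr rfl fun j hj => ?_
    have hjk : j ≤ k := Nat.lt_succ_iff.mp (Finset.mem_range.mp hj)
    rw [neg_one_pow_sub_eq hjk, hfib]
    ring
  rw [hin, T_key]
  have hfk : (k.factorial : ℝ) ≠ 0 := Nat.cast_ne_zero.mpr k.factorial_ne_zero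
  field_simp
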